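/- Let Γ be a strongly regular graph with parameters (v, k, λ, μ) whose complement is connected, and suppose Γ is type II: there exist integers r and s with r ≥ s, s < 0, r + s = λ − μ and r·s = μ − k (so k, r, s are the eigenvalues of Γ, with k > r). Suppose that 0 < frac(−k/s) < 1 − (r² + r)/(v − 2k + λ), where frac(a) = a − ⌊a⌋ and the quantities are computed in ℝ. Then the clique number of Γ satisfies ω(Γ) ≤ ⌊−k/s⌋. -/

import Mathlib

open Finset SimpleGraph

private lemma int_consec_nonneg (n : ℤ) : 0 ≤ n * (n - 1) := by
  rcases le_or_gt n 0 with h | h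
  · have := mul_nonneg (neg_nonneg.mpr h) (by linarith : (0:ℤ) ≤ 1 - n)
    nlinarith
  · have h1 : 1 ≤ n := h
    exact mul_nonneg (by linarith) (by linarith)

private lemma nat_le_sq (n : ℕ) : n ≤ n * n := by
  cases n with
  | zero => simp
  | succ m => exact Nat.le_mul_of_pos_left _ (Nat.succ_pos m)

/-- The key algebraic identity. -/
private lemma keyid (σ r d g μ v k l : ℤ)
    (hk : k = μ + r * σ) (hl : l = μ + r - σ) (hμ : μ = σ * (d + 1) - g)
    (hid : k * (k - l - 1) = (v - k - 1) * μ) :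
    μ * (d * (d + 1) * (v - (r + d + 1)) - 2 * d * (r + d + 1) * (k - (r + d + 1) + 1)
        + (r + d + 1) * (r + d + 1 - 1) * (l - (r + d + 1) + 2))
      = r * (r + 1) * (g - d - 1) * (g - σ) := by
  subst hk hl hμ
  linear_combination (-(d * (d + 1))) * hid

/-- The clique adjacency polynomial is nonnegative at integers, by double counting. -/
private lemma clique_count {V : Type*} [Fintype V] [DecidableEq V] (G : SimpleGraph V)
    [DecidableRel G.Adj] {v k l μ : ℕ} (hsrg : G.IsSRGWith v k l μ)
    {c : ℕ} (hc2 : 2 ≤ c) {t : Finset V} (ht : G.IsNClique c t) (e : ℤ) :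
    0 ≤ e * (e + 1) * ((v : ℤ) - (c : ℤ)) - 2 * e * (c : ℤ) * ((k : ℤ) - (c : ℤ) + 1)
      + (c : ℤ) * ((c : ℤ) - 1) * ((l : ℤ) - (c : ℤ) + 2) := by
  classical
  have htc : t.card = c := ht.2
  have hclique := ht.1
  set S : Finset V := tᶜ with hS
  -- the degree of x into t
  set d : V → ℕ := fun x => (t.filter (fun y => G.Adj x y)).card with hd
  -- cardinality facts
  have hcv : c ≤ v := by
    rw [← htc, ← hsrg.card]
    exact Finset.card_le_univ t
  have hSv : (S.card : ℤ) = (v : ℤ) - c := by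
    have : S.card = Fintype.card V - t.card := Finset.card_compl t
    rw [this, hsrg.card, htc]
    have : c ≤ v := hcv
    push_cast [Nat.cast_sub this]
    ring
  -- Counting A : ∑ d + c*(c-1) = c*k
  have filter_split : ∀ (p : V → Prop) [DecidablePred p],
      (t.filter p).card + (S.filter p).card = (univ.filter p).card := by
    intro p hp
    rw [← Finset.card_union_of_disjoint
      (Finset.disjoint_filter_filter (disjoint_compl_right)),
      ← Finset.filter_union, Finset.union_compl]
  have hA : (∑ x ∈ S, d x) + c * (c - 1) = c * k := by
    have swap : (∑ x ∈ S, d x) = ∑ y ∈ t, (S.filter (fun x => G.Adj y x)).card := by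
      simp only [hd, Finset.card_filter]
      rw [Finset.sum_comm]
      refine Finset.sum_congr rfl fun y _ => Finset.sum_congr rfl fun x _ => ?_
      simp [G.adj_comm]
    have per : ∀ y ∈ t, (S.filter (fun x => G.Adj y x)).card + (c - 1) = k := by
      intro y hy
      have h1 : (t.filter (fun x => G.Adj y x)) = t.erase y := by
        ext z
        simp only [Finset.mem_filter, Finset.mem_erase]
        constructor
        · rintro ⟨hz, hadj⟩
          exact ⟨fun h => G.irrefl (h ▸ hadj), hz⟩
        · rintro ⟨hne, hz⟩
          exact ⟨hz, hclique hy hz (fun h => hne (h.symm))⟩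
      have h2 : (univ.filter (fun x => G.Adj y x)).card = k := by
        rw [← neighborFinset_eq_filter]
        exact hsrg.regular y
      have h3 := filter_split (fun x => G.Adj y x)
      rw [h1, h2, Finset.card_erase_of_mem hy, htc] at h3
      omega
    rw [swap]
    calc (∑ y ∈ t, (S.filter (fun x => G.Adj y x)).card) + c * (c-1)
        = ∑ y ∈ t, ((S.filter (fun x => G.Adj y x)).card + (c-1)) := by
          rw [Finset.sum_add_distrib, Finset.sum_const, htc, smul_eq_mul]
      _ = ∑ y ∈ t, k := Finset.sum_congr rfl per
      _ = c * k := by rw [Finset.sum_const, htc, smul_eq_mul]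
  -- Counting B
  have hB : (∑ x ∈ S, ((t.filter (fun y => G.Adj x y)).offDiag).card)
      + (c * (c-1)) * (c - 2) = (c * (c-1)) * l := by
    have hoffcard : t.offDiag.card = c * (c - 1) := by
      rw [Finset.offDiag_card, htc]
      cases c with
      | zero => simp
      | succ n => simp [Nat.succ_sub_one, Nat.mul_sub_one]; ring_nf; omega
    have swap : (∑ x ∈ S, ((t.filter (fun y => G.Adj x y)).offDiag).card)
        = ∑ p ∈ t.offDiag, (S.filter (fun x => G.Adj p.1 x ∧ G.Adj p.2 x)).card := by
      have hre : ∀ x : V, (t.filter (fun y => G.Adj x y)).offDiag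
          = t.offDiag.filter (fun p => G.Adj x p.1 ∧ G.Adj x p.2) := by
        intro x
        ext ⟨a, b⟩
        simp only [Finset.mem_offDiag, Finset.mem_filter]
        tauto
      simp only [hre, Finset.card_filter]
      rw [Finset.sum_comm]
      refine Finset.sum_congr rfl fun p _ => Finset.sum_congr rfl fun x _ => ?_
      simp [G.adj_comm]
    have per : ∀ p ∈ t.offDiag,
        (S.filter (fun x => G.Adj p.1 x ∧ G.Adj p.2 x)).card + (c - 2) = l := by
      intro p hp
      rw [Finset.mem_offDiag] at hp
      obtain ⟨hp1, hp2, hpne⟩ := hp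
      have hadj : G.Adj p.1 p.2 := hclique hp1 hp2 hpne
      have h1 : (t.filter (fun x => G.Adj p.1 x ∧ G.Adj p.2 x)) = (t.erase p.1).erase p.2 := by
        ext z
        simp only [Finset.mem_filter, Finset.mem_erase]
        constructor
        · rintro ⟨hz, h1, h2⟩
          exact ⟨fun h => G.irrefl (h ▸ h2), fun h => G.irrefl (h ▸ h1), hz⟩
        · rintro ⟨hne2, hne1, hz⟩
          exact ⟨hz, hclique hp1 hz (fun h => hne1 h.symm), hclique hp2 hz (fun h => hne2 h.symm)⟩
      have h2 : (univ.filter (fun x => G.Adj p.1 x ∧ G.Adj p.2 x)).card = l := by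
        have : (univ.filter (fun x => G.Adj p.1 x ∧ G.Adj p.2 x))
            = (G.commonNeighbors p.1 p.2).toFinset := by
          ext z
          simp [mem_commonNeighbors]
        rw [this, Set.toFinset_card, hsrg.of_adj p.1 p.2 hadj]
      have h3 := filter_split (fun x => G.Adj p.1 x ∧ G.Adj p.2 x)
      have hmem2 : p.2 ∈ t.erase p.1 := Finset.mem_erase.mpr ⟨hpne.symm, hp2⟩
      rw [h1, h2, Finset.card_erase_of_mem hmem2, Finset.card_erase_of_mem hp1, htc] at h3
      omega
    rw [swap]
    calc (∑ p ∈ t.offDiag, (S.filter (fun x => G.Adj p.1 x ∧ G.Adj p.2 x)).card)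
          + (c * (c-1)) * (c - 2)
        = ∑ p ∈ t.offDiag, ((S.filter (fun x => G.Adj p.1 x ∧ G.Adj p.2 x)).card + (c-2)) := by
          rw [Finset.sum_add_distrib, Finset.sum_const, hoffcard, smul_eq_mul]
      _ = ∑ p ∈ t.offDiag, l := Finset.sum_congr rfl per
      _ = (c * (c-1)) * l := by rw [Finset.sum_const, hoffcard, smul_eq_mul]
  -- cast to ℤ
  have hc1 : 1 ≤ c := by omega
  have hAz : (∑ x ∈ S, (d x : ℤ)) = (c : ℤ) * k - c * (c - 1) := by
    have h := hA
    zify [hc1] at h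
    linarith
  have hBz : (∑ x ∈ S, (((t.filter (fun y => G.Adj x y)).offDiag).card : ℤ))
      = (c:ℤ) * ((c:ℤ)-1) * ((l:ℤ) - ((c:ℤ)-2)) := by
    have h := hB
    zify [hc1, hc2] at h
    linarith
  have hDz : ∀ x : V, (((t.filter (fun y => G.Adj x y)).offDiag).card : ℤ)
      = (d x : ℤ) * (d x : ℤ) - (d x : ℤ) := by
    intro x
    rw [Finset.offDiag_card, Nat.cast_sub (nat_le_sq _)]
    push_cast
    rfl
  have hsum2 : (∑ x ∈ S, ((d x : ℤ) * (d x : ℤ) - (d x : ℤ)))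
      = (c:ℤ) * ((c:ℤ)-1) * ((l:ℤ) - ((c:ℤ)-2)) := by
    rw [← hBz]
    exact Finset.sum_congr rfl fun x _ => (hDz x).symm
  -- main inequality
  have key : (0:ℤ) ≤ ∑ x ∈ S, ((d x : ℤ) - e) * (((d x : ℤ) - e) - 1) :=
    Finset.sum_nonneg fun x _ => int_consec_nonneg _
  have expand : (∑ x ∈ S, ((d x : ℤ) - e) * (((d x : ℤ) - e) - 1))
      = (∑ x ∈ S, ((d x : ℤ) * (d x : ℤ) - (d x : ℤ)))
        - (2*e) * (∑ x ∈ S, (d x : ℤ)) + (e*e + e) * (S.card : ℤ) := by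
    have e1 : (∑ x ∈ S, ((d x : ℤ) - e) * (((d x : ℤ) - e) - 1))
        = ∑ x ∈ S, ((((d x:ℤ) * (d x:ℤ) - (d x:ℤ)) - (2*e)*(d x:ℤ)) + (e*e+e)) :=
      Finset.sum_congr rfl fun x _ => by ring
    rw [e1, Finset.sum_add_distrib, Finset.sum_sub_distrib, ← Finset.mul_sum,
      Finset.sum_const, nsmul_eq_mul]
    ring
  rw [expand, hsum2, hAz, hSv] at key
  exact le_of_le_of_eq key (by ring)

/-- Existence of an adjacent pair with a common non-neighbour, from co-connectedness. -/
private lemma exists_cfg {V : Type*} (G : SimpleGraph V) (hcoconn : Gᶜ.Connected)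
    {a b : V} (hab : G.Adj a b) :
    ∃ x y z : V, G.Adj x y ∧ ¬ G.Adj x z ∧ ¬ G.Adj y z ∧ z ≠ x ∧ z ≠ y := by
  have aux : ∀ (n : ℕ) (w : V) (p : Gᶜ.Walk w b), p.length ≤ n → Gᶜ.Adj a w →
      ∃ x y z : V, G.Adj x y ∧ ¬ G.Adj x z ∧ ¬ G.Adj y z ∧ z ≠ x ∧ z ≠ y := by
    intro n
    induction n with
    | zero =>
      intro w p hlen haw
      cases p with
      | nil => exact absurd hab ((G.compl_adj a b).mp haw).2
      | cons h q => simp [SimpleGraph.Walk.length_cons] at hlen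
    | succ n ih =>
      intro w p hlen haw
      cases p with
      | nil => exact absurd hab ((G.compl_adj a b).mp haw).2
      | @cons _ u _ h2 q =>
        by_cases hau : Gᶜ.Adj a u
        · exact ih u q (by simp [SimpleGraph.Walk.length_cons] at hlen ⊢; omega) hau
        · by_cases hau2 : a = u
          · subst hau2
            cases q with
            | nil => exact absurd hab.ne (by simp)
            | @cons _ u' _ h3 q' =>
              exact ih u' q' (by simp [SimpleGraph.Walk.length_cons] at hlen ⊢; omega) h3
          · have hadj : G.Adj a u := by
              by_contra hcontra
              exact hau ((G.compl_adj a u).mpr ⟨hau2, hcontra⟩)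
            refine ⟨a, u, w, hadj, ((G.compl_adj a w).mp haw).2,
              fun h => ((G.compl_adj w u).mp h2).2 h.symm,
              (((G.compl_adj a w).mp haw).1).symm, ((G.compl_adj w u).mp h2).1⟩
  obtain ⟨p⟩ := hcoconn.preconnected a b
  cases p with
  | nil => exact absurd rfl hab.ne
  | cons h q => exact aux q.length _ q le_rfl h

set_option maxHeartbeats 1600000 in
theorem stmt_1 {V : Type*} [Fintype V] [DecidableEq V] (G : SimpleGraph V) [DecidableRel G.Adj]
    (v k l μ : ℕ) (hsrg : G.IsSRGWith v k l μ)
    (hnoncomplete : G ≠ ⊤) (hedge : G ≠ ⊥)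
    (hcoconn : Gᶜ.Connected)
    (r s : ℤ) (hrs : s ≤ r) (hs : s < 0)
    (hsum : r + s = (l : ℤ) - μ) (hprod : r * s = (μ : ℤ) - k)
    (hfrac1 : 0 < Int.fract (-(k : ℝ) / s))
    (hfrac2 : Int.fract (-(k : ℝ) / s) <
      1 - ((r : ℝ) ^ 2 + r) / ((v : ℝ) - 2 * k + l)) :
    (G.cliqueNum : ℤ) ≤ ⌊-(k : ℝ) / s⌋ := by
  classical
  -- basic structural facts
  have hex : ∃ a b : V, G.Adj a b := by
    by_contra h
    push_neg at h
    exact hedge (by ext a b; simp [h a b])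
  obtain ⟨a, b, hab⟩ := hex
  have hnex : ∃ x y : V, x ≠ y ∧ ¬ G.Adj x y := by
    by_contra h
    push_neg at h
    refine hnoncomplete ?_
    ext x y
    simp only [top_adj]
    exact ⟨fun hadj => hadj.ne, h x y⟩
  obtain ⟨x0, y0, hxy0, hnadj0⟩ := hnex
  -- k ≥ 1
  have hk1 : 1 ≤ k := by
    have h1 : 0 < G.degree a := by
      rw [← card_neighborFinset_eq_degree]
      exact Finset.card_pos.mpr ⟨b, (mem_neighborFinset G a b).mpr hab⟩
    have := hsrg.regular a
    omega
  -- l + 1 ≤ k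
  have hlk : l + 1 ≤ k := by
    have h1 := hab.card_commonNeighbors_lt_degree
    rw [hsrg.of_adj a b hab, hsrg.regular a] at h1
    omega
  -- k + 1 ≤ v
  have hkv : k + 1 ≤ v := by
    have h1 := G.degree_lt_card_verts a
    rw [hsrg.regular a, hsrg.card] at h1
    omega
  -- μ ≤ k
  have hmuk : μ ≤ k := by
    have h1 := hsrg.of_not_adj hxy0 hnadj0
    have h2 := G.card_commonNeighbors_le_degree_left x0 y0
    rw [h1, hsrg.regular x0] at h2
    exact h2
  -- the integer parameter identity
  have hidz : (k:ℤ) * ((k:ℤ) - l - 1) = ((v:ℤ) - k - 1) * μ := by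
    have h1 := hsrg.param_eq (G := G) (by omega)
    have h2 : k - l - 1 = k - (l + 1) := by omega
    have h3 : v - k - 1 = v - (k + 1) := by omega
    rw [h2, h3] at h1
    have := congrArg (fun n : ℕ => (n : ℤ)) h1
    push_cast [Nat.cast_sub hlk, Nat.cast_sub hkv] at this
    push_cast
    linarith
  -- positivity of D = v - 2k + l, via co-connectedness
  have hD : (0:ℤ) < (v:ℤ) - 2*k + l := by
    obtain ⟨x, y, z, hxy, hxz, hyz, hzx, hzy⟩ := exists_cfg G hcoconn hab
    have hunion := hsrg.card_neighborFinset_union_of_adj hxy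
    have hlk2 : l ≤ 2 * k := by omega
    have hne : (G.neighborFinset x ∪ G.neighborFinset y) ≠ univ := by
      intro hcontra
      have hz : z ∈ G.neighborFinset x ∪ G.neighborFinset y := hcontra ▸ Finset.mem_univ z
      rw [Finset.mem_union, mem_neighborFinset, mem_neighborFinset] at hz
      tauto
    have hlt : (G.neighborFinset x ∪ G.neighborFinset y).card < Fintype.card V :=
      Finset.card_lt_card (Finset.ssubset_univ_iff.mpr hne)
    rw [hunion, hsrg.card] at hlt
    omega
  -- real to integer : basic floor facts
  set M : ℤ := ⌊-(k : ℝ) / s⌋ with hM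
  have hsR : (0:ℝ) < (-s : ℤ) := by exact_mod_cast Int.neg_pos.mpr hs
  have hsR' : ((s:ℤ):ℝ) ≠ 0 := by
    intro h
    rw [show ((s:ℤ):ℝ) = -((-s : ℤ):ℝ) by push_cast; ring] at h
    linarith
  have hfloor1 : (M:ℝ) < -(k : ℝ) / s := by
    have := hfrac1
    rw [← Int.self_sub_floor] at this
    linarith
  have hfloor2 : -(k : ℝ) / s < (M:ℝ) + 1 := Int.lt_floor_add_one _
  have hxs : (-(k : ℝ) / s) * ((-s : ℤ):ℝ) = (k:ℝ) := by
    push_cast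
    field_simp
  -- integer bounds: (-s)*M < k < (-s)*(M+1)
  have hb1 : (-s) * M < (k:ℤ) := by
    have h1 : (M:ℝ) * ((-s:ℤ):ℝ) < (k:ℝ) := by
      calc (M:ℝ) * ((-s:ℤ):ℝ) < (-(k : ℝ) / s) * ((-s : ℤ):ℝ) :=
            mul_lt_mul_of_pos_right hfloor1 hsR
        _ = (k:ℝ) := hxs
    exact_mod_cast (by push_cast at h1 ⊢; linarith : ((-s*M : ℤ):ℝ) < ((k:ℕ):ℝ))
  have hb2 : (k:ℤ) < (-s) * (M + 1) := by
    have h1 : (k:ℝ) < ((M:ℝ) + 1) * ((-s:ℤ):ℝ) := by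
      calc (k:ℝ) = (-(k : ℝ) / s) * ((-s : ℤ):ℝ) := hxs.symm
        _ < ((M:ℝ) + 1) * ((-s:ℤ):ℝ) := mul_lt_mul_of_pos_right hfloor2 hsR
    exact_mod_cast (by push_cast at h1 ⊢; linarith : ((k:ℕ):ℝ) < ((-s*(M+1) : ℤ):ℝ))
  -- s ≤ -2
  have hs2 : s ≤ -2 := by
    by_contra h
    push_neg at h
    have hs1 : s = -1 := by omega
    have : -(k : ℝ) / s = ((k:ℕ):ℝ) := by rw [hs1]; push_cast; field_simp
    rw [this, Int.fract_natCast] at hfrac1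
    exact lt_irrefl 0 hfrac1
  -- eigenvalue relations
  have hkμ : (k:ℤ) = (μ:ℤ) + r * (-s) := by linarith [hprod]
  have hlμ : (l:ℤ) = (μ:ℤ) + r + s := by linarith [hsum]
  -- r ≥ 0
  have hr0 : 0 ≤ r := by
    by_contra h
    push_neg at h
    have h1 : r ≤ -1 := by omega
    have h2 : r * (-s) ≤ -1 * (-s) := by
      apply mul_le_mul_of_nonneg_right h1 (by omega)
    have h3 : (μ:ℤ) ≤ (k:ℤ) := by exact_mod_cast hmuk
    nlinarith
  -- D*μ identity
  set D : ℤ := (v:ℤ) - 2*k + l with hDdef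
  have hstep : D * μ = ((k:ℤ) - μ) * ((k:ℤ) - l - 1) := by
    rw [hDdef]; linear_combination (-1 : ℤ) * hidz
  have h2' : (k:ℤ) - l - 1 = (r+1) * ((-s)-1) := by linear_combination hkμ - hlμ
  have h1' : (k:ℤ) - μ = r * (-s) := by linarith
  have hDμ : D * μ = (r * (-s)) * ((r+1) * ((-s)-1)) := by rw [hstep, h1', h2']
  -- r ≥ 1
  have hr1 : 1 ≤ r := by
    rcases lt_or_ge r 1 with h | h
    · exfalso
      have hr00 : r = 0 := by omega
      have : D * μ = 0 := by rw [hDμ, hr00]; ring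
      have hμ0 : (μ:ℤ) = 0 := by
        rcases mul_eq_zero.mp this with h' | h'
        · exfalso; rw [hDdef] at hD; omega
        · exact h'
      have : (k:ℤ) = 0 := by rw [hkμ, hμ0, hr00]; ring
      omega
    · exact h
  have hμ1 : 1 ≤ (μ:ℤ) := by
    rcases lt_or_ge (μ:ℤ) 1 with h | h
    · exfalso
      have hμnn : (0:ℤ) ≤ μ := Int.natCast_nonneg μ
      have hμ0 : (μ:ℤ) = 0 := by omega
      have h0 : D * μ = 0 := by rw [hμ0]; ring
      rw [hDμ] at h0
      have p1 : (0:ℤ) < r * (-s) := mul_pos (by omega) (by omega)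
      have p2 : (0:ℤ) < (r+1) * ((-s)-1) := mul_pos (by omega) (by omega)
      nlinarith [mul_pos p1 p2]
    · exact h
  -- convert hfrac2 to an integer inequality
  have hDR : (0:ℝ) < (v:ℝ) - 2*(k:ℝ) + (l:ℝ) := by
    have : ((D:ℤ):ℝ) = (v:ℝ) - 2*(k:ℝ) + (l:ℝ) := by rw [hDdef]; push_cast; ring
    rw [← this]
    exact_mod_cast hD
  have hfr : Int.fract (-(k:ℝ)/s) = -(k:ℝ)/s - (M:ℝ) := by
    rw [hM, ← Int.self_sub_floor]
  have hq1 : ((r:ℝ)^2 + r) / ((v:ℝ) - 2*(k:ℝ) + (l:ℝ)) < 1 - (-(k:ℝ)/s - (M:ℝ)) := by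
    have h := hfrac2
    rw [hfr] at h
    linarith
  have hq2 : ((r:ℝ)^2 + r) < (1 - (-(k:ℝ)/s - (M:ℝ))) * ((v:ℝ) - 2*(k:ℝ) + (l:ℝ)) :=
    (div_lt_iff₀ hDR).mp hq1
  have hq3 : ((-s:ℤ):ℝ) * ((r:ℝ)^2 + r)
      < ((-s:ℤ):ℝ) * ((1 - (-(k:ℝ)/s - (M:ℝ))) * ((v:ℝ) - 2*(k:ℝ) + (l:ℝ))) :=
    mul_lt_mul_of_pos_left hq2 hsR
  have hq4 : ((-s:ℤ):ℝ) * ((1 - (-(k:ℝ)/s - (M:ℝ))) * ((v:ℝ) - 2*(k:ℝ) + (l:ℝ)))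
      = ((v:ℝ) - 2*(k:ℝ) + (l:ℝ)) * ((((-s)*(M+1) - (k:ℤ) : ℤ)):ℝ) := by
    have hxs' := hxs
    push_cast at hxs' ⊢
    linear_combination (-((v:ℝ) - 2*(k:ℝ) + (l:ℝ))) * hxs'
  have hcond : (-s) * (r^2 + r) < D * ((-s)*(M+1) - (k:ℤ)) := by
    have h6 := hq3
    rw [hq4] at h6
    have h7 : ((((-s) * (r^2+r)) : ℤ):ℝ) < (((D * ((-s)*(M+1) - (k:ℤ))) : ℤ):ℝ) := by
      rw [hDdef]
      push_cast at h6 ⊢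
      linarith [h6]
    exact_mod_cast h7
  -- the auxiliary integer quantities g and d
  set g : ℤ := (-s)*(M+1) - (k:ℤ) with hgdef
  set d : ℤ := M - r with hddef
  have hg1 : 1 ≤ g := by rw [hgdef]; linarith
  have hg2 : g ≤ (-s) - 1 := by rw [hgdef]; linarith
  have hμeq : (μ:ℤ) = (-s)*(d+1) - g := by
    rw [hddef, hgdef]
    linear_combination -hkμ
  have hd0 : 0 ≤ d := by
    by_contra h
    push_neg at h
    have h1 : d + 1 ≤ 0 := by omega
    nlinarith [mul_nonneg (show (0:ℤ) ≤ -s by omega) (show (0:ℤ) ≤ -(d+1) by omega)]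
  -- g ≥ d + 2
  have hP : (0:ℤ) < (-s) * (r*(r+1)) := mul_pos (by omega) (mul_pos (by omega) (by omega))
  have key1 : (μ:ℤ) * ((-s)*(r^2+r)) < (μ:ℤ) * (D*g) :=
    mul_lt_mul_of_pos_left hcond (by linarith)
  have chain : (μ:ℤ) * ((-s)*(r*(r+1))) < (g*((-s)-1)) * ((-s)*(r*(r+1))) := by
    calc (μ:ℤ) * ((-s)*(r*(r+1))) = (μ:ℤ) * ((-s)*(r^2+r)) := by ring
      _ < (μ:ℤ) * (D*g) := key1
      _ = g * (D*μ) := by ring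
      _ = g * ((r*(-s)) * ((r+1)*((-s)-1))) := by rw [hDμ]
      _ = (g*((-s)-1)) * ((-s)*(r*(r+1))) := by ring
  have hμlt : (μ:ℤ) < g*((-s)-1) := lt_of_mul_lt_mul_right chain (le_of_lt hP)
  have h5 : (d+1)*(-s) < g*(-s) := by linarith [hμlt, hμeq, hg1]
  have hdg : d + 1 < g := lt_of_mul_lt_mul_right h5 (by omega)
  have hgd : d + 2 ≤ g := by omega
  have hMrd : M = r + d := by rw [hddef]; ring
  -- final contradiction with the clique count
  by_contra hcon
  push_neg at hcon
  have hM1 : 1 ≤ M := by omega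
  set cn : ℕ := (M+1).toNat with hcndef
  have hcnz : (cn:ℤ) = M + 1 := Int.toNat_of_nonneg (by omega)
  have hcn2 : 2 ≤ cn := by omega
  have hcnle : cn ≤ G.cliqueNum := by
    have h1 : (cn:ℤ) ≤ (G.cliqueNum:ℤ) := by omega
    exact_mod_cast h1
  obtain ⟨T, hT⟩ := G.exists_isNClique_cliqueNum
  obtain ⟨t, hts, htc⟩ := Finset.exists_subset_card_eq (s := T) (n := cn) (by rw [hT.2]; exact hcnle)
  have htclique : G.IsNClique cn t := ⟨hT.1.subset (Finset.coe_subset.mpr hts), htc⟩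
  have hF := clique_count G hsrg hcn2 htclique d
  have hcnr : (cn:ℤ) = r + d + 1 := by omega
  rw [hcnr] at hF
  have hkey := keyid (-s) r d g (μ:ℤ) (v:ℤ) (k:ℤ) (l:ℤ) hkμ
    (by linarith : (l:ℤ) = (μ:ℤ) + r - (-s)) hμeq hidz
  have h0 : (0:ℤ) ≤ (μ:ℤ) * (d * (d + 1) * ((v:ℤ) - (r + d + 1))
      - 2 * d * (r + d + 1) * ((k:ℤ) - (r + d + 1) + 1)
      + (r + d + 1) * (r + d + 1 - 1) * ((l:ℤ) - (r + d + 1) + 2)) :=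
    mul_nonneg (by linarith) (le_of_le_of_eq hF (by ring))
  have hneg : r * (r + 1) * (g - d - 1) * (g - (-s)) < 0 := by
    have hA : (0:ℤ) < r * (r+1) := mul_pos (by omega) (by omega)
    have hAB : (0:ℤ) < r * (r+1) * (g - d - 1) := mul_pos hA (by omega)
    have hC : g - (-s) < 0 := by omega
    exact mul_neg_of_pos_of_neg hAB hC
  rw [hkey] at h0
  exact absurd h0 (not_le.mpr hneg)
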